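/- Let τ > 0, let A : [0,τ) → ℝ^{n×n} be continuous, and suppose ∫₀ᵗ μ(A(s)) ds → −∞ as t → τ⁻. Then every differentiable x : [0,τ) → ℝⁿ with x'(t) = A(t)x(t) satisfies ‖x(t)‖ → 0 as t → τ⁻. -/

import Mathlib

open Matrix Filter Topology

/-- Eigenvalues of a real matrix that is Hermitian (= symmetric); junk value `0` otherwise. -/
noncomputable def eigs {n : ℕ} (M : Matrix (Fin n) (Fin n) ℝ) : Fin n → ℝ :=
  if h : M.IsHermitian then h.eigenvalues else 0

/-- Largest eigenvalue of a real symmetric matrix. -/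
noncomputable def lamMax {n : ℕ} (M : Matrix (Fin n) (Fin n) ℝ) : ℝ := ⨆ i, eigs M i

/-- Smallest eigenvalue of a real symmetric matrix. -/
noncomputable def lamMin {n : ℕ} (M : Matrix (Fin n) (Fin n) ℝ) : ℝ := ⨅ i, eigs M i

/-- Logarithmic norm w.r.t. the Euclidean norm: `μ(M) = λ_max((M + Mᵀ)/2)`. -/
noncomputable def logNorm {n : ℕ} (M : Matrix (Fin n) (Fin n) ℝ) : ℝ :=
  lamMax ((1 / 2 : ℝ) • (M + Mᵀ))

/-- A matrix acting on Euclidean space. -/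
noncomputable def mulVecE {n : ℕ} (M : Matrix (Fin n) (Fin n) ℝ)
    (v : EuclideanSpace ℝ (Fin n)) : EuclideanSpace ℝ (Fin n) :=
  Matrix.toEuclideanCLM (𝕜 := ℝ) M v

/-- Operator norm of a matrix induced by the Euclidean vector norm. -/
noncomputable def opNorm {n : ℕ} (M : Matrix (Fin n) (Fin n) ℝ) : ℝ :=
  ‖Matrix.toEuclideanCLM (𝕜 := ℝ) M‖

open MeasureTheory

lemma symPart_isHermitian {n : ℕ} (M : Matrix (Fin n) (Fin n) ℝ) :
    ((1 / 2 : ℝ) • (M + Mᵀ)).IsHermitian := by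
  unfold Matrix.IsHermitian
  ext i j
  simp [Matrix.conjTranspose_apply, Matrix.transpose_apply, mul_comm, add_comm, add_mul]

lemma mulVecE_eq {n : ℕ} (M : Matrix (Fin n) (Fin n) ℝ) (v : EuclideanSpace ℝ (Fin n)) :
    mulVecE M v = Matrix.toEuclideanLin M v := rfl

lemma coe_mulVecE {n : ℕ} (M : Matrix (Fin n) (Fin n) ℝ) (v : EuclideanSpace ℝ (Fin n)) :
    ⇑(mulVecE M v) = M *ᵥ ⇑v := rfl

lemma rayleigh_le {n : ℕ} (M : Matrix (Fin n) (Fin n) ℝ) (hM : M.IsHermitian)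
    (v : EuclideanSpace ℝ (Fin n)) :
    (inner ℝ v (mulVecE M v) : ℝ) ≤ lamMax M * ‖v‖ ^ 2 := by
  classical
  set b := hM.eigenvectorBasis with hb
  have hsym : (Matrix.toEuclideanLin M).IsSymmetric :=
    (Matrix.isHermitian_iff_isSymmetric).1 hM
  have expand : (inner ℝ v (mulVecE M v) : ℝ)
      = ∑ i, (inner ℝ v (b i) : ℝ) * (inner ℝ (b i) (mulVecE M v) : ℝ) :=
    (b.sum_inner_mul_inner v (mulVecE M v)).symm
  have hbi : ∀ i, mulVecE M (b i) = hM.eigenvalues i • b i := by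
    intro i
    apply (WithLp.equiv 2 _).injective
    ext j
    have := hM.mulVec_eigenvectorBasis i
    calc (mulVecE M (b i)) j = (M *ᵥ ⇑(b i)) j := rfl
    _ = (hM.eigenvalues i • ⇑(b i)) j := by rw [this]
    _ = (hM.eigenvalues i • b i) j := rfl
  have step : ∀ i, (inner ℝ (b i) (mulVecE M v) : ℝ) = hM.eigenvalues i * inner ℝ (b i) v := by
    intro i
    rw [mulVecE_eq, ← hsym (b i) v, ← mulVecE_eq, hbi i, real_inner_smul_left]
  have key : (inner ℝ v (mulVecE M v) : ℝ)
      = ∑ i, hM.eigenvalues i * ((inner ℝ v (b i) : ℝ) * (inner ℝ (b i) v : ℝ)) := by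
    rw [expand]; congr 1; ext i; rw [step]; ring
  have hle : ∀ i, hM.eigenvalues i ≤ lamMax M := by
    intro i
    have : eigs M i ≤ ⨆ j, eigs M j :=
      le_ciSup (Set.Finite.bddAbove (Set.finite_range _)) i
    rw [show eigs M i = hM.eigenvalues i by unfold eigs; rw [dif_pos hM]] at this; exact this
  have hnn : ∀ i, (0:ℝ) ≤ (inner ℝ v (b i) : ℝ) * (inner ℝ (b i) v : ℝ) := by
    intro i
    rw [real_inner_comm (b i) v]
    exact mul_self_nonneg _
  calc (inner ℝ v (mulVecE M v) : ℝ)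
      = ∑ i, hM.eigenvalues i * ((inner ℝ v (b i) : ℝ) * (inner ℝ (b i) v : ℝ)) := key
    _ ≤ ∑ i, lamMax M * ((inner ℝ v (b i) : ℝ) * (inner ℝ (b i) v : ℝ)) := by
        apply Finset.sum_le_sum
        intro i _
        exact mul_le_mul_of_nonneg_right (hle i) (hnn i)
    _ = lamMax M * ∑ i, (inner ℝ v (b i) : ℝ) * (inner ℝ (b i) v : ℝ) := by
        rw [Finset.mul_sum]
    _ = lamMax M * (inner ℝ v v : ℝ) := by rw [b.sum_inner_mul_inner v v]
    _ = lamMax M * ‖v‖ ^ 2 := by rw [real_inner_self_eq_norm_sq]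

lemma inner_mulVecE_dot {n : ℕ} (M : Matrix (Fin n) (Fin n) ℝ) (v : EuclideanSpace ℝ (Fin n)) :
    (inner ℝ v (mulVecE M v) : ℝ) = ⇑v ⬝ᵥ (M *ᵥ ⇑v) := by
  simp [PiLp.inner_apply, dotProduct, mulVecE]
  exact Finset.sum_congr rfl fun i _ => mul_comm _ _

lemma inner_symPart {n : ℕ} (M : Matrix (Fin n) (Fin n) ℝ) (v : EuclideanSpace ℝ (Fin n)) :
    (inner ℝ v (mulVecE ((1 / 2 : ℝ) • (M + Mᵀ)) v) : ℝ) = (inner ℝ v (mulVecE M v) : ℝ) := by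
  rw [inner_mulVecE_dot, inner_mulVecE_dot]
  have h1 : ⇑v ⬝ᵥ (Mᵀ *ᵥ ⇑v) = ⇑v ⬝ᵥ (M *ᵥ ⇑v) := by
    rw [Matrix.mulVec_transpose, Matrix.dotProduct_mulVec, dotProduct_comm]
  rw [Matrix.smul_mulVec, Matrix.add_mulVec, dotProduct_smul,
    dotProduct_add, h1]
  simp [smul_eq_mul]; ring

lemma lamMax_le_of_herm {n : ℕ} [Nonempty (Fin n)] {M N : Matrix (Fin n) (Fin n) ℝ}
    (hM : M.IsHermitian) (hN : N.IsHermitian) :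
    lamMax M ≤ lamMax N + ‖Matrix.toEuclideanCLM (𝕜 := ℝ) M - Matrix.toEuclideanCLM (𝕜 := ℝ) N‖ := by
  classical
  obtain ⟨i, hi⟩ := Finite.exists_max (eigs M)
  set b := hM.eigenvectorBasis with hbdef
  set e : EuclideanSpace ℝ (Fin n) := b i with he
  have hnorm : ‖e‖ = 1 := b.orthonormal.1 i
  have hbi : mulVecE M e = hM.eigenvalues i • e := by
    apply (WithLp.equiv 2 _).injective
    ext j
    have h := hM.mulVec_eigenvectorBasis i
    calc (mulVecE M e) j = (M *ᵥ ⇑(b i)) j := rfl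
    _ = (hM.eigenvalues i • ⇑(b i)) j := by rw [h]
    _ = (hM.eigenvalues i • e) j := rfl
  have heig : eigs M i = hM.eigenvalues i := by unfold eigs; rw [dif_pos hM]
  have hmax : lamMax M = hM.eigenvalues i := by
    rw [← heig]
    refine le_antisymm (ciSup_le fun j => hi j) (le_ciSup (Set.Finite.bddAbove (Set.finite_range _)) i)
  have hinner : (inner ℝ e (mulVecE M e) : ℝ) = lamMax M := by
    rw [hbi, real_inner_smul_right, real_inner_self_eq_norm_sq, hnorm, hmax]
    ring
  have hsplit : (inner ℝ e (mulVecE M e) : ℝ) = inner ℝ e (mulVecE N e)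
      + inner ℝ e ((Matrix.toEuclideanCLM (𝕜 := ℝ) M - Matrix.toEuclideanCLM (𝕜 := ℝ) N) e) := by
    rw [← inner_add_right]
    congr 1
    simp [mulVecE, ContinuousLinearMap.sub_apply]
  have h1 : (inner ℝ e (mulVecE N e) : ℝ) ≤ lamMax N := by
    have := rayleigh_le N hN e
    rwa [hnorm, one_pow, mul_one] at this
  have h2 : (inner ℝ e ((Matrix.toEuclideanCLM (𝕜 := ℝ) M - Matrix.toEuclideanCLM (𝕜 := ℝ) N) e) : ℝ)
      ≤ ‖Matrix.toEuclideanCLM (𝕜 := ℝ) M - Matrix.toEuclideanCLM (𝕜 := ℝ) N‖ := by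
    calc (inner ℝ e ((Matrix.toEuclideanCLM (𝕜 := ℝ) M - Matrix.toEuclideanCLM (𝕜 := ℝ) N) e) : ℝ)
        ≤ ‖e‖ * ‖(Matrix.toEuclideanCLM (𝕜 := ℝ) M - Matrix.toEuclideanCLM (𝕜 := ℝ) N) e‖ :=
          real_inner_le_norm _ _
      _ ≤ ‖e‖ * (‖Matrix.toEuclideanCLM (𝕜 := ℝ) M - Matrix.toEuclideanCLM (𝕜 := ℝ) N‖ * ‖e‖) := by
          gcongr
          exact ContinuousLinearMap.le_opNorm _ _
      _ = ‖Matrix.toEuclideanCLM (𝕜 := ℝ) M - Matrix.toEuclideanCLM (𝕜 := ℝ) N‖ := by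
          rw [hnorm]; ring
  linarith [hinner, hsplit, h1, h2]

lemma logNorm_continuous {n : ℕ} :
    Continuous (logNorm : Matrix (Fin n) (Fin n) ℝ → ℝ) := by
  rcases Nat.eq_zero_or_pos n with hn | hn
  · subst hn
    have : (logNorm : Matrix (Fin 0) (Fin 0) ℝ → ℝ) = fun _ => 0 := by
      funext M
      simp only [logNorm, lamMax, iSup]
      rw [Set.range_eq_empty, Real.sSup_empty]
    rw [this]; exact continuous_const
  · haveI : Nonempty (Fin n) := ⟨⟨0, hn⟩⟩
    set L : Matrix (Fin n) (Fin n) ℝ → (EuclideanSpace ℝ (Fin n) →L[ℝ] EuclideanSpace ℝ (Fin n)) :=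
      fun M => Matrix.toEuclideanCLM (𝕜 := ℝ) ((1 / 2 : ℝ) • (M + Mᵀ)) with hL
    have hT : Continuous (fun M : Matrix (Fin n) (Fin n) ℝ =>
        Matrix.toEuclideanCLM (𝕜 := ℝ) M) := by
      exact LinearMap.continuous_of_finiteDimensional
        (f := { toFun := fun M => Matrix.toEuclideanCLM (𝕜 := ℝ) M,
                map_add' := fun a b => map_add _ a b,
                map_smul' := fun c a => map_smul _ c a })
    have hLcont : Continuous L := by
      apply hT.comp
      exact (continuous_const : Continuous fun _ : Matrix (Fin n) (Fin n) ℝ => (1 / 2 : ℝ)).smul (continuous_id.add continuous_id.matrix_transpose :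
        Continuous fun M : Matrix (Fin n) (Fin n) ℝ => M + Mᵀ)
    have hkey : ∀ M N : Matrix (Fin n) (Fin n) ℝ, |logNorm M - logNorm N| ≤ ‖L M - L N‖ := by
      intro M N
      rw [abs_sub_le_iff]
      constructor
      · have := lamMax_le_of_herm (symPart_isHermitian M) (symPart_isHermitian N)
        simp only [hL, logNorm]
        linarith [this]
      · have := lamMax_le_of_herm (symPart_isHermitian N) (symPart_isHermitian M)
        rw [norm_sub_rev]
        simp only [hL, logNorm]
        linarith [this]
    rw [continuous_iff_continuousAt]
    intro M
    have h0 : Tendsto (fun N => ‖L N - L M‖) (𝓝 M) (𝓝 0) := by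
      have h1 : Tendsto (fun N => L N - L M) (𝓝 M) (𝓝 (L M - L M)) :=
        (hLcont.continuousAt (x := M)).sub tendsto_const_nhds
      rw [sub_self] at h1
      simpa using h1.norm
    unfold ContinuousAt
    rw [tendsto_iff_dist_tendsto_zero]
    apply squeeze_zero (fun N => dist_nonneg) (fun N => ?_) h0
    rw [Real.dist_eq]
    exact hkey N M

/-- sufficiency part of Theorem 1, p = 2: if `∫₀ᵗ μ(A(s)) ds → -∞`
as `t → τ⁻`, then every solution of `x' = A(t) x` on `[0, τ)` satisfies `‖x t‖ → 0`. -/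
theorem stmt1 {n : ℕ} (τ : ℝ) (hτ : 0 < τ)
    (A : ℝ → Matrix (Fin n) (Fin n) ℝ) (hA : ContinuousOn A (Set.Ico 0 τ))
    (hint : Tendsto (fun t => ∫ s in (0 : ℝ)..t, logNorm (A s)) (𝓝[<] τ) atBot)
    (x : ℝ → EuclideanSpace ℝ (Fin n))
    (hx : ∀ t ∈ Set.Ico (0 : ℝ) τ, HasDerivAt x (mulVecE (A t) (x t)) t) :
    Tendsto (fun t => ‖x t‖) (𝓝[<] τ) (𝓝 0) := by
  set g : ℝ → ℝ := fun s => logNorm (A s) with hgdef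
  have hg : ContinuousOn g (Set.Ico 0 τ) := logNorm_continuous.comp_continuousOn hA
  set F : ℝ → ℝ := fun t => ∫ s in (0:ℝ)..t, g s with hFdef
  have hq : ∀ t, (inner ℝ (x t) (mulVecE (A t) (x t)) : ℝ) ≤ g t * ‖x t‖ ^ 2 := by
    intro t
    rw [← inner_symPart (A t) (x t)]
    exact rayleigh_le _ (symPart_isHermitian (A t)) (x t)
  have bound : ∀ t ∈ Set.Ico (0:ℝ) τ, ‖x t‖ ≤ ‖x 0‖ * Real.exp (F t) := by
    intro t₀ ht₀
    obtain ⟨ht₀0, ht₀τ⟩ := ht₀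
    rcases eq_or_lt_of_le ht₀0 with h0 | h0
    · rw [← h0]
      simp [hFdef, intervalIntegral.integral_same]
    set φ : ℝ → ℝ := fun t => (inner ℝ (x t) (x t) : ℝ) * Real.exp (-(2 * F t)) with hφdef
    have hsub : Set.Icc (0:ℝ) t₀ ⊆ Set.Ico 0 τ := fun s hs => ⟨hs.1, lt_of_le_of_lt hs.2 ht₀τ⟩
    have hGint : IntegrableOn g (Set.uIcc (0:ℝ) t₀) :=
      ((hg.mono (by rwa [Set.uIcc_of_le ht₀0])).integrableOn_compact isCompact_uIcc)
    have hFcont : ContinuousOn F (Set.Icc 0 t₀) := by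
      have := intervalIntegral.continuousOn_primitive_interval (a := (0:ℝ)) (b := t₀) hGint
      rwa [Set.uIcc_of_le ht₀0] at this
    have hxcont : ContinuousOn x (Set.Icc 0 t₀) := fun s hs =>
      ((hx s (hsub hs)).continuousAt).continuousWithinAt
    have hφcont : ContinuousOn φ (Set.Icc 0 t₀) := by
      apply ContinuousOn.mul
      · exact ContinuousOn.inner hxcont hxcont
      · exact Real.continuous_exp.comp_continuousOn ((continuousOn_const.mul hFcont).neg)
    have hderiv : ∀ s ∈ Set.Ioo (0:ℝ) t₀, ∃ D : ℝ, HasDerivAt φ D s ∧ D ≤ 0 := by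
      intro s hs
      have hsIco : s ∈ Set.Ico 0 τ := ⟨hs.1.le, hs.2.trans ht₀τ⟩
      have hsIoo : s ∈ Set.Ioo 0 τ := ⟨hs.1, hs.2.trans ht₀τ⟩
      have hgci : ContinuousAt g s :=
        (hg.mono Set.Ioo_subset_Ico_self).continuousAt (Ioo_mem_nhds hsIoo.1 hsIoo.2)
      have hmeas : StronglyMeasurableAtFilter g (𝓝 s) :=
        ContinuousOn.stronglyMeasurableAtFilter isOpen_Ioo (hg.mono Set.Ioo_subset_Ico_self) s hsIoo
      have hGint2 : IntervalIntegrable g volume 0 s := by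
        apply ContinuousOn.intervalIntegrable
        apply hg.mono
        rw [Set.uIcc_of_le hsIco.1]
        exact fun u hu => ⟨hu.1, lt_of_le_of_lt hu.2 hsIoo.2⟩
      have hF' : HasDerivAt F (g s) s :=
        intervalIntegral.integral_hasDerivAt_right hGint2 hmeas hgci
      have hx' := hx s hsIco
      have hI := HasDerivAt.inner ℝ hx' hx'
      have hE : HasDerivAt (fun t => Real.exp (-(2 * F t)))
          (Real.exp (-(2 * F s)) * -(2 * g s)) s := ((hF'.const_mul 2).neg).exp
      have hφ' := hI.mul hE
      refine ⟨_, hφ', ?_⟩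
      have h1 := hq s
      have h2 : (inner ℝ (x s) (x s) : ℝ) = ‖x s‖ ^ 2 := real_inner_self_eq_norm_sq (x s)
      have h3 : (0:ℝ) < Real.exp (-(2 * F s)) := Real.exp_pos _
      have hcomm : (inner ℝ (mulVecE (A s) (x s)) (x s) : ℝ) = inner ℝ (x s) (mulVecE (A s) (x s)) :=
        real_inner_comm _ _
      have key : (2 * (inner ℝ (x s) (mulVecE (A s) (x s)) : ℝ)
          - 2 * (g s * ‖x s‖ ^ 2)) * Real.exp (-(2 * F s)) ≤ 0 :=
        mul_nonpos_of_nonpos_of_nonneg (by linarith [h1]) h3.le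
      rw [hcomm, h2]
      linarith [key]
    have hanti : AntitoneOn φ (Set.Icc 0 t₀) := by
      apply antitoneOn_of_deriv_nonpos (convex_Icc 0 t₀) hφcont
      · rw [interior_Icc]
        intro s hs
        obtain ⟨D, hD, _⟩ := hderiv s hs
        exact hD.differentiableAt.differentiableWithinAt
      · rw [interior_Icc]
        intro s hs
        obtain ⟨D, hD, hle⟩ := hderiv s hs
        rw [hD.deriv]
        exact hle
    have hmono := hanti (Set.left_mem_Icc.2 ht₀0) (Set.right_mem_Icc.2 ht₀0) ht₀0
    have hF0 : F 0 = 0 := intervalIntegral.integral_same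
    rw [hφdef] at hmono
    simp only [hF0, mul_zero, neg_zero, Real.exp_zero, mul_one] at hmono
    have hN0 : (inner ℝ (x 0) (x 0) : ℝ) = ‖x 0‖ ^ 2 := real_inner_self_eq_norm_sq (x 0)
    have hNt : (inner ℝ (x t₀) (x t₀) : ℝ) = ‖x t₀‖ ^ 2 := real_inner_self_eq_norm_sq (x t₀)
    rw [hN0, hNt] at hmono
    have hsq : ‖x t₀‖ ^ 2 ≤ (‖x 0‖ * Real.exp (F t₀)) ^ 2 := by
      have hXY : Real.exp (-(2 * F t₀)) * Real.exp (2 * F t₀) = 1 := by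
        rw [← Real.exp_add]; simp
      have hE2 : Real.exp (2 * F t₀) = Real.exp (F t₀) * Real.exp (F t₀) := by
        rw [← Real.exp_add]; ring_nf
      have hYpos : (0:ℝ) < Real.exp (2 * F t₀) := Real.exp_pos _
      have h4 := mul_le_mul_of_nonneg_right hmono hYpos.le
      calc ‖x t₀‖ ^ 2 = ‖x t₀‖ ^ 2 * (Real.exp (-(2 * F t₀)) * Real.exp (2 * F t₀)) := by
            rw [hXY, mul_one]
        _ = ‖x t₀‖ ^ 2 * Real.exp (-(2 * F t₀)) * Real.exp (2 * F t₀) := by ring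
        _ ≤ ‖x 0‖ ^ 2 * Real.exp (2 * F t₀) := h4
        _ = (‖x 0‖ * Real.exp (F t₀)) ^ 2 := by rw [hE2]; ring
    calc ‖x t₀‖ = √(‖x t₀‖ ^ 2) := by rw [Real.sqrt_sq (norm_nonneg _)]
      _ ≤ √((‖x 0‖ * Real.exp (F t₀)) ^ 2) := Real.sqrt_le_sqrt hsq
      _ = ‖x 0‖ * Real.exp (F t₀) := Real.sqrt_sq (by positivity)
  -- final squeeze
  have hup : Tendsto (fun t => ‖x 0‖ * Real.exp (F t)) (𝓝[<] τ) (𝓝 0) := by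
    have h1 : Tendsto (fun t => Real.exp (F t)) (𝓝[<] τ) (𝓝 0) :=
      Real.tendsto_exp_atBot.comp hint
    have := h1.const_mul (‖x 0‖)
    simpa using this
  have hev : ∀ᶠ t in 𝓝[<] τ, ‖x t‖ ≤ ‖x 0‖ * Real.exp (F t) := by
    filter_upwards [Ioo_mem_nhdsLT_of_mem (Set.mem_Ioc.2 ⟨hτ, le_refl τ⟩)] with t ht
    exact bound t ⟨ht.1.le, ht.2⟩
  exact tendsto_of_tendsto_of_tendsto_of_le_of_le' tendsto_const_nhds hup
    (Eventually.of_forall fun t => norm_nonneg _) hev
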